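/- For every odd natural number n, the sum a(0)+a(1)+⋯+a(n) of the first n+1 odious numbers equals n² + (3n+1)/2, i.e., 2·S(n) = 2n² + 3n + 1. -/

import Mathlib

/-- Sum of base-`d` digits of `n`. -/
def sdig (d n : ℕ) : ℕ := (Nat.digits d n).sum

/-- `t_d(n)`: base-`d` digit sum of `n`, reduced mod `d`. -/
def td (d n : ℕ) : ℕ := sdig d n % d

/-- `a_{j,d}(n)`: n-th natural (0-indexed, increasing) with base-`d` digit sum ≡ j mod d. -/
noncomputable def agen (d j n : ℕ) : ℕ := Nat.nth (fun k => sdig d k % d = j) n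

/-- n-th odious number (binary digit sum odd), 0-indexed increasing. -/
noncomputable def odious (n : ℕ) : ℕ := Nat.nth (fun k => (Nat.digits 2 k).sum % 2 = 1) n

/-- n-th evil number (binary digit sum even), 0-indexed increasing. -/
noncomputable def evil (n : ℕ) : ℕ := Nat.nth (fun k => (Nat.digits 2 k).sum % 2 = 0) n

/-- Thue–Morse sequence: parity of the binary digit sum. -/
def tm (n : ℕ) : ℕ := (Nat.digits 2 n).sum % 2

lemma tm_two_mul (n : ℕ) : tm (2 * n) = tm n := by
  rcases Nat.eq_zero_or_pos n with h | h
  · simp [h]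
  · unfold tm
    rw [Nat.digits_def' (by norm_num : 1 < 2) (by positivity)]
    simp [Nat.mul_div_cancel_left _ (by norm_num : 0 < 2)]

lemma tm_two_mul_add_one (n : ℕ) : tm (2 * n + 1) = (tm n + 1) % 2 := by
  unfold tm
  rw [Nat.digits_def' (by norm_num : 1 < 2) (by positivity)]
  have h1 : (2 * n + 1) % 2 = 1 := by omega
  have h2 : (2 * n + 1) / 2 = n := by omega
  rw [h1, h2]
  simp [Nat.add_mod, Nat.add_comm]

lemma tm_lt (n : ℕ) : tm n < 2 := Nat.mod_lt _ (by norm_num)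

lemma count_odious (n : ℕ) :
    Nat.count (fun k => (Nat.digits 2 k).sum % 2 = 1) (2 * n) = n := by
  induction n with
  | zero => simp
  | succ m ih =>
    have he : 2 * (m + 1) = (2 * m + 1) + 1 := by ring
    rw [he, Nat.count_succ, Nat.count_succ, ih]
    have h1 : ((Nat.digits 2 (2 * m)).sum % 2 = 1) ↔ tm m = 1 := by
      rw [show (Nat.digits 2 (2*m)).sum % 2 = tm (2*m) from rfl, tm_two_mul]
    have h2 : ((Nat.digits 2 (2 * m + 1)).sum % 2 = 1) ↔ tm m = 0 := by
      rw [show (Nat.digits 2 (2*m+1)).sum % 2 = tm (2*m+1) from rfl, tm_two_mul_add_one]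
      have := tm_lt m
      omega
    have := tm_lt m
    rcases (by omega : tm m = 0 ∨ tm m = 1) with h | h <;>
      simp only [h1, h2, h, if_true, if_false] <;> simp

lemma odious_add_tm (n : ℕ) : odious n + tm n = 2 * n + 1 := by
  have := tm_lt n
  rcases (by omega : tm n = 0 ∨ tm n = 1) with h | h
  · have hp : (Nat.digits 2 (2 * n + 1)).sum % 2 = 1 := by
      rw [show (Nat.digits 2 (2*n+1)).sum % 2 = tm (2*n+1) from rfl, tm_two_mul_add_one, h]
    have hc : Nat.count (fun k => (Nat.digits 2 k).sum % 2 = 1) (2 * n + 1) = n := by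
      rw [Nat.count_succ, count_odious]
      have : ¬ ((Nat.digits 2 (2 * n)).sum % 2 = 1) := by
        rw [show (Nat.digits 2 (2*n)).sum % 2 = tm (2*n) from rfl, tm_two_mul, h]; omega
      simp [this]
    have := Nat.nth_count (p := fun k => (Nat.digits 2 k).sum % 2 = 1) hp
    rw [hc] at this
    unfold odious
    omega
  · have hp : (Nat.digits 2 (2 * n)).sum % 2 = 1 := by
      rw [show (Nat.digits 2 (2*n)).sum % 2 = tm (2*n) from rfl, tm_two_mul, h]
    have := Nat.nth_count (p := fun k => (Nat.digits 2 k).sum % 2 = 1) hp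
    rw [count_odious] at this
    unfold odious
    omega

lemma sum_odd_range (N : ℕ) : ∑ k ∈ Finset.range N, (2 * k + 1) = N ^ 2 := by
  induction N with
  | zero => simp
  | succ j ihj => rw [Finset.sum_range_succ, ihj]; ring

lemma sum_tm (m : ℕ) : ∑ k ∈ Finset.range (2 * m), tm k = m := by
  induction m with
  | zero => simp
  | succ j ih =>
    have he : 2 * (j + 1) = (2 * j + 1) + 1 := by ring
    rw [he, Finset.sum_range_succ, Finset.sum_range_succ, ih,
      tm_two_mul, tm_two_mul_add_one]
    have := tm_lt j
    omega

theorem stmt8 (n : ℕ) (hn : Odd n) :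
    2 * ∑ k ∈ Finset.range (n + 1), odious k = 2 * n ^ 2 + 3 * n + 1 := by
  obtain ⟨m, hm⟩ := hn
  have hsum : ∑ k ∈ Finset.range (n + 1), (odious k + tm k)
      = ∑ k ∈ Finset.range (n + 1), (2 * k + 1) := by
    exact Finset.sum_congr rfl fun k _ => odious_add_tm k
  rw [Finset.sum_add_distrib] at hsum
  have h1 : n + 1 = 2 * (m + 1) := by omega
  have h2 : ∑ k ∈ Finset.range (n + 1), tm k = m + 1 := by rw [h1, sum_tm]
  have h3 : ∑ k ∈ Finset.range (n + 1), (2 * k + 1) = (n + 1) ^ 2 := sum_odd_range (n+1)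
  rw [h2, h3] at hsum
  have : 2 * ∑ k ∈ Finset.range (n + 1), odious k
      = 2 * (n + 1) ^ 2 - 2 * (m + 1) := by omega
  rw [this]
  have : 2 * (m+1) ≤ 2 * (n+1)^2 := by nlinarith
  nlinarith [this]
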